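/- Suppose Y, Σ are symmetric positive definite, 0 < λ < 1, α > 0, and the LMI [[λY, (Y-2αΣ)^T],[Y-2αΣ, Y]] ⪰ 0 holds. If A, B, F satisfy AY + BF = Y - 2αΣ, then K = FY^{-1} makes A+BK Schur stable (spectral radius < 1). -/

import Mathlib

open Matrix

/-- Spectral radius of a real matrix: supremum of the moduli of its complex eigenvalues. -/
noncomputable def specRad {n : ℕ} (A : Matrix (Fin n) (Fin n) ℝ) : ℝ :=
  sSup ((fun z : ℂ => ‖z‖) '' spectrum ℂ (A.map Complex.ofReal))

open ComplexOrder

section SchurAux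

variable {n : ℕ}

lemma conjTranspose_map_ofReal (B : Matrix (Fin n) (Fin n) ℝ) :
    (B.map Complex.ofReal)ᴴ = Bᵀ.map Complex.ofReal := by
  ext i j
  simp [conjTranspose_apply, Complex.conj_ofReal]

open scoped MatrixOrder in
theorem Matrix.posSemidef_iff_eq_transpose_mul_self {N : Matrix (Fin n) (Fin n) ℝ} :
    N.PosSemidef ↔ ∃ B : Matrix (Fin n) (Fin n) ℝ, N = Bᴴ * B := by
  constructor
  · intro hA
    classical
    obtain ⟨X, hX, -, hXX⟩ :=
      CFC.exists_sqrt_of_isSelfAdjoint_of_quasispectrumRestricts hA.isHermitian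
        (QuasispectrumRestricts.nnreal_of_nonneg hA.nonneg)
    exact ⟨X, by rw [← hXX]; change X * X = star X * X; rw [hX.star_eq]⟩
  · rintro ⟨B, rfl⟩
    exact posSemidef_conjTranspose_mul_self B

lemma posSemidef_map_ofReal {N : Matrix (Fin n) (Fin n) ℝ} (hN : N.PosSemidef) :
    (N.map Complex.ofReal).PosSemidef := by
  obtain ⟨B, rfl⟩ := Matrix.posSemidef_iff_eq_transpose_mul_self.mp hN
  have : (Bᴴ * B).map Complex.ofReal
      = (B.map Complex.ofReal)ᴴ * (B.map Complex.ofReal) := by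
    ext i j
    simp [Matrix.mul_apply, conjTranspose_apply, Complex.conj_ofReal]
  rw [this]
  exact posSemidef_conjTranspose_mul_self _

lemma posDef_map_ofReal {N : Matrix (Fin n) (Fin n) ℝ} (hN : N.PosDef) :
    (N.map Complex.ofReal).PosDef := by
  obtain ⟨B, hB⟩ := Matrix.posSemidef_iff_eq_transpose_mul_self.mp hN.posSemidef
  have hdetB : B.det ≠ 0 := by
    intro h
    have := hN.det_pos
    rw [hB, Matrix.det_mul, Matrix.det_conjTranspose, h] at this
    simp at this
  set W := B.map Complex.ofReal with hW
  have hdetW : W.det ≠ 0 := by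
    have : W.det = Complex.ofReal B.det := (RingHom.map_det Complex.ofRealHom B).symm
    rw [this]
    simpa using hdetB
  rw [Matrix.posDef_iff_dotProduct_mulVec]
  constructor
  · have h := hN.isHermitian
    rw [Matrix.IsHermitian] at h ⊢
    rw [conjTranspose_map_ofReal]
    congr 1
  · intro v hv
    have hWv : W *ᵥ v ≠ 0 := by
      intro h0
      exact hdetW (Matrix.exists_mulVec_eq_zero_iff.mp ⟨v, hv, h0⟩)
    have hmap : N.map Complex.ofReal = Wᴴ * W := by
      rw [hB, hW]
      ext i j
      simp [Matrix.mul_apply, conjTranspose_apply, Complex.conj_ofReal]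
    rw [hmap, ← mulVec_mulVec, dotProduct_mulVec, ← star_mulVec]
    exact Matrix.dotProduct_star_self_pos_iff.mpr hWv

lemma exists_eigenvector_of_mem_spectrum {M : Matrix (Fin n) (Fin n) ℂ} {μ : ℂ}
    (h : μ ∈ spectrum ℂ M) : ∃ v, v ≠ 0 ∧ M *ᵥ v = μ • v := by
  rw [spectrum.mem_iff] at h
  have hdet : (μ • (1 : Matrix (Fin n) (Fin n) ℂ) - M).det = 0 := by
    by_contra hd
    exact h (by
      rw [Algebra.algebraMap_eq_smul_one]
      exact (Matrix.isUnit_iff_isUnit_det _).mpr (isUnit_iff_ne_zero.mpr hd))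
  obtain ⟨v, hv0, hv⟩ := Matrix.exists_mulVec_eq_zero_iff.mpr hdet
  refine ⟨v, hv0, ?_⟩
  rw [sub_mulVec, sub_eq_zero] at hv
  rw [← hv, smul_mulVec, one_mulVec]


lemma psd_congr {Y Z : Matrix (Fin n) (Fin n) ℝ} {l : ℝ}
    (h2 : (l • Y - Zᵀ * Y⁻¹ * Z).PosSemidef) (h1 : Y⁻¹ * Y = 1) (hT : Y⁻¹ᵀ = Y⁻¹) :
    (l • Y⁻¹ - (Z * Y⁻¹)ᵀ * Y⁻¹ * (Z * Y⁻¹)).PosSemidef := by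
  have h3 := h2.conjTranspose_mul_mul_same Y⁻¹
  have hYc : (Y⁻¹)ᴴ = Y⁻¹ := by
    rw [show (Y⁻¹)ᴴ = Y⁻¹ᵀ from by ext i j; simp [conjTranspose_apply], hT]
  rw [hYc] at h3
  have e : Y⁻¹ * (l • Y - Zᵀ * Y⁻¹ * Z) * Y⁻¹
      = l • Y⁻¹ - (Z * Y⁻¹)ᵀ * Y⁻¹ * (Z * Y⁻¹) := by
    rw [Matrix.transpose_mul, hT, Matrix.mul_sub, Matrix.sub_mul]
    congr 1
    · rw [Matrix.mul_smul, Matrix.smul_mul, h1, Matrix.one_mul]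
    · simp only [Matrix.mul_assoc]
  rwa [e] at h3


end SchurAux

/-- If the contraction LMI [[λY, (Y-2αΣ)ᵀ],[Y-2αΣ, Y]] ⪰ 0 holds with Y, Σ ≻ 0,
0 < λ < 1, α > 0, and AY + BF = Y - 2αΣ, then K = FY⁻¹ makes A + BK Schur stable. -/
theorem lmi_implies_schur_stability {n m : ℕ}
    (A : Matrix (Fin n) (Fin n) ℝ) (B : Matrix (Fin n) (Fin m) ℝ)
    (F : Matrix (Fin m) (Fin n) ℝ) (Y S : Matrix (Fin n) (Fin n) ℝ)
    (hY : Y.IsSymm) (hYpd : Y.PosDef) (hS : S.IsSymm) (hSpd : S.PosDef)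
    (α l : ℝ) (hα : 0 < α) (hl0 : 0 < l) (hl1 : l < 1)
    (hlmi : (Matrix.fromBlocks (l • Y) (Y - (2 * α) • S)ᵀ (Y - (2 * α) • S) Y).PosSemidef)
    (heq : A * Y + B * F = Y - (2 * α) • S) :
    specRad (A + B * (F * Y⁻¹)) < 1 := by
  unfold specRad
  have hYdet : IsUnit Y.det := hYpd.det_pos.ne'.isUnit
  haveI : Invertible Y := Y.invertibleOfIsUnitDet hYdet
  have hYinvY : Y⁻¹ * Y = 1 := Matrix.nonsing_inv_mul Y hYdet
  have hYYinv : Y * Y⁻¹ = 1 := Matrix.mul_nonsing_inv Y hYdet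
  have hYinvT : Y⁻¹ᵀ = Y⁻¹ := by rw [Matrix.transpose_nonsing_inv, hY.eq]
  -- Schur complement
  have hZc : (Y - (2 * α) • S)ᵀᴴ = (Y - (2 * α) • S) := by
    ext i j; simp [conjTranspose_apply]
  have hlmi' : (Matrix.fromBlocks (l • Y) (Y - (2 * α) • S)ᵀ
      ((Y - (2 * α) • S)ᵀ)ᴴ Y).PosSemidef := by rwa [hZc]
  have h2 := (Matrix.PosDef.fromBlocks₂₂ _ _ hYpd).mp hlmi'
  rw [hZc] at h2
  -- M = Z * Y⁻¹
  have hM : A + B * (F * Y⁻¹) = (Y - (2 * α) • S) * Y⁻¹ := by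
    have e : (A * Y + B * F) * Y⁻¹ = A + B * (F * Y⁻¹) := by
      rw [Matrix.add_mul, Matrix.mul_assoc A Y Y⁻¹, hYYinv, Matrix.mul_one,
        Matrix.mul_assoc]
    rw [← e, heq]
  have hN := psd_congr h2 hYinvY hYinvT
  rw [← hM] at hN
  set M := A + B * (F * Y⁻¹) with hMdef
  set Mc := M.map Complex.ofReal with hMc
  set P := (Y⁻¹).map Complex.ofReal with hP
  have hPpd : P.PosDef := posDef_map_ofReal hYpd.inv
  have hNc : ((l • Y⁻¹ - Mᵀ * Y⁻¹ * M).map Complex.ofReal).PosSemidef :=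
    posSemidef_map_ofReal hN
  have hNceq : (l • Y⁻¹ - Mᵀ * Y⁻¹ * M).map Complex.ofReal
      = (l : ℂ) • P - Mcᴴ * P * Mc := by
    rw [show Mcᴴ = Mᵀ.map Complex.ofReal from conjTranspose_map_ofReal M, hMc, hP]
    ext i j
    simp [Matrix.mul_apply, Matrix.map_apply, Matrix.sub_apply, Matrix.smul_apply,
      Finset.mul_sum]
  rw [hNceq] at hNc
  -- bound every element of the spectrum
  have hbound : ∀ x ∈ (fun z : ℂ => ‖z‖) '' spectrum ℂ Mc, x ≤ Real.sqrt l := by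
    rintro x ⟨μ, hμ, rfl⟩
    obtain ⟨v, hv0, hv⟩ := exists_eigenvector_of_mem_spectrum hμ
    have hq : 0 < star v ⬝ᵥ (P *ᵥ v) := (Matrix.posDef_iff_dotProduct_mulVec.mp hPpd).2 hv0
    have hkey : (0 : ℂ) ≤ star v ⬝ᵥ (((l : ℂ) • P - Mcᴴ * P * Mc) *ᵥ v) := (Matrix.posSemidef_iff_dotProduct_mulVec.mp hNc).2 v
    have hexp : star v ⬝ᵥ (((l : ℂ) • P - Mcᴴ * P * Mc) *ᵥ v)
        = ((l : ℝ) - Complex.normSq μ : ℝ) * (star v ⬝ᵥ (P *ᵥ v)) := by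
      rw [Matrix.sub_mulVec, dotProduct_sub, smul_mulVec, dotProduct_smul]
      have h1 : star v ⬝ᵥ ((Mcᴴ * P * Mc) *ᵥ v)
          = ((Complex.normSq μ : ℝ) : ℂ) * (star v ⬝ᵥ (P *ᵥ v)) := by
        rw [← Matrix.mulVec_mulVec, ← Matrix.mulVec_mulVec, hv, Matrix.mulVec_smul,
          Matrix.mulVec_smul, dotProduct_smul, dotProduct_mulVec, ← star_mulVec, hv,
          star_smul, smul_dotProduct]
        rw [smul_smul, smul_eq_mul, Complex.normSq_eq_conj_mul_self, Complex.star_def]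
        ring
      rw [h1, smul_eq_mul]
      push_cast
      ring
    rw [hexp] at hkey
    have hqre : 0 < (star v ⬝ᵥ (P *ᵥ v)).re := (Complex.lt_def.mp hq).1
    have hqim : (star v ⬝ᵥ (P *ᵥ v)).im = 0 := ((Complex.lt_def.mp hq).2).symm
    have hre : 0 ≤ ((l : ℝ) - Complex.normSq μ) * (star v ⬝ᵥ (P *ᵥ v)).re := by
      have := (Complex.le_def.mp hkey).1
      simpa [Complex.mul_re, hqim] using this
    have hns : Complex.normSq μ ≤ l := by nlinarith
    calc ‖μ‖ = Real.sqrt (Complex.normSq μ) := Complex.norm_def μ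
      _ ≤ Real.sqrt l := Real.sqrt_le_sqrt hns
  refine lt_of_le_of_lt (Real.sSup_le hbound (Real.sqrt_nonneg l)) ?_
  calc Real.sqrt l < Real.sqrt 1 := Real.sqrt_lt_sqrt hl0.le hl1
    _ = 1 := Real.sqrt_one
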